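/- arXiv:2408.05138 — 2 statements merged into one kernel-verified Lean document; each statement's English description precedes it below -/
import Mathlib

section
/- If 0 < θ ≤ 3 then θ − ln θ − 1 ≥ (θ−1)²/12. -/
theorem stmt_4 (θ : ℝ) (hθ0 : 0 < θ) (hθ3 : θ ≤ 3) :
    (θ - 1) ^ 2 / 12 ≤ θ - Real.log θ - 1 := by
  set s := Real.sqrt θ with hs
  have hs0 : 0 < s := Real.sqrt_pos.mpr hθ0
  have hs2 : s ^ 2 = θ := Real.sq_sqrt hθ0.le
  have hlog : Real.log s ≤ s - 1 := Real.log_le_sub_one_of_pos hs0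
  have hlogθ : Real.log θ = 2 * Real.log s := by
    rw [hs, Real.log_sqrt hθ0.le]; ring
  have hsle : s ≤ 2 := by nlinarith
  rw [hlogθ]
  nlinarith [sq_nonneg (s - 1), sq_nonneg ((s - 1) * (s + 1)), mul_nonneg (sq_nonneg (s-1)) (sub_nonneg.mpr hsle)]
end

section
/- Let g : ℝ³ → ℝ with g ∈ L^q and ∇g ∈ L^r where q ∈ (1,∞) and r ∈ (3,∞). Then g ∈ L^∞ and there is a constant C = C(q,r) with ‖g‖_{L^∞} ≤ C·‖g‖_{L^q}^{q(r−3)/(3r+q(r−3))}·‖∇g‖_{L^r}^{3r/(3r+q(r−3))}. -/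
open MeasureTheory ENNReal

open Metric

local notation "E3" => EuclideanSpace ℝ (Fin 3)
open Metric

lemma lint_smul (h : E3 → ℝ≥0∞) (hm : Measurable h) {c : ℝ} (hc : 0 < c) :
    ∫⁻ x, h (c • x) = ENNReal.ofReal (c ^ 3)⁻¹ * ∫⁻ x, h x := by
  rw [← lintegral_map hm (measurable_const_smul c),
    Measure.map_addHaar_smul volume hc.ne']
  simp [finrank_euclideanSpace, lintegral_smul_measure,
    abs_of_nonneg (inv_nonneg.2 (by positivity : (0:ℝ) ≤ c ^ 3))]

lemma dil_eLpNorm (f : E3 → ℝ) (hf : Continuous f) {p c : ℝ} (hp : 0 < p) (hc : 0 < c) :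
    eLpNorm (fun x => f (c • x)) (ENNReal.ofReal p) volume
      = ENNReal.ofReal c ^ (-(3 / p)) * eLpNorm f (ENNReal.ofReal p) volume := by
  have hp0 : ENNReal.ofReal p ≠ 0 := (ofReal_pos.2 hp).ne'
  rw [eLpNorm_eq_lintegral_rpow_enorm_toReal hp0 ofReal_ne_top,
      eLpNorm_eq_lintegral_rpow_enorm_toReal hp0 ofReal_ne_top,
      toReal_ofReal hp.le]
  have hm : Measurable fun x : E3 => ‖f x‖ₑ ^ p := by fun_prop
  rw [lint_smul _ hm hc]
  rw [ENNReal.mul_rpow_of_nonneg _ _ (by positivity : (0:ℝ) ≤ 1/p)]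
  congr 1
  have h1 : (c ^ 3)⁻¹ = c ^ (-(3:ℝ)) := by
    rw [← Real.rpow_natCast c 3, ← Real.rpow_neg hc.le]; norm_num
  rw [h1, ← ENNReal.ofReal_rpow_of_pos hc, ← ENNReal.rpow_mul]
  congr 1
  ring

lemma seg (g : E3 → ℝ) (hg : ContDiff ℝ 1 g) (x y : E3) :
    |g x| ≤ |g y| + ∫ t in (0:ℝ)..1, ‖fderiv ℝ g (x + t • (y - x))‖ * ‖y - x‖ := by
  set γ : ℝ → E3 := fun t => x + t • (y - x) with hγ
  have hcγ : Continuous γ := by fun_prop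
  have hd : ∀ t : ℝ, HasDerivAt (fun t => g (γ t)) ((fderiv ℝ g (γ t)) (y - x)) t := by
    intro t
    have h1 : HasDerivAt γ (y - x) t := by simpa [hγ] using ((hasDerivAt_id t).smul_const (y - x)).const_add x
    exact ((hg.differentiable one_ne_zero (γ t)).hasFDerivAt).comp_hasDerivAt t h1
  have hcont : Continuous fun t => (fderiv ℝ g (γ t)) (y - x) :=
    ((hg.continuous_fderiv one_ne_zero).comp hcγ).clm_apply continuous_const
  have hint : IntervalIntegrable (fun t => (fderiv ℝ g (γ t)) (y - x)) volume 0 1 :=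
    hcont.intervalIntegrable 0 1
  have key : g y - g x = ∫ t in (0:ℝ)..1, (fderiv ℝ g (γ t)) (y - x) := by
    have := intervalIntegral.integral_eq_sub_of_hasDerivAt (f := fun t => g (γ t))
      (fun t _ => hd t) hint
    simp [hγ] at this ⊢
    rw [this]
  have h2 : |g x| - |g y| ≤ |g y - g x| := by
    have := abs_sub_abs_le_abs_sub (g x) (g y)
    have h3 : |g x - g y| = |g y - g x| := abs_sub_comm _ _
    linarith
  have h4 : |g y - g x| ≤ ∫ t in (0:ℝ)..1, ‖fderiv ℝ g (γ t)‖ * ‖y - x‖ := by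
    rw [key]
    calc |∫ t in (0:ℝ)..1, (fderiv ℝ g (γ t)) (y - x)|
        ≤ ∫ t in (0:ℝ)..1, |(fderiv ℝ g (γ t)) (y - x)| := by
          simpa using intervalIntegral.norm_integral_le_integral_norm (f := fun t => (fderiv ℝ g (γ t)) (y - x)) (by norm_num : (0:ℝ) ≤ 1)
      _ ≤ ∫ t in (0:ℝ)..1, ‖fderiv ℝ g (γ t)‖ * ‖y - x‖ := by
          apply intervalIntegral.integral_mono_on (by norm_num) (hcont.norm.intervalIntegrable 0 1)
            ((((hg.continuous_fderiv one_ne_zero).comp hcγ).norm.mul continuous_const).intervalIntegrable 0 1)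
          intro t _
          exact (fderiv ℝ g (γ t)).le_opNorm (y - x)
  linarith


lemma holder_ball (f : E3 → ℝ≥0∞) (hm : Measurable f) {p : ℝ} (hp : 1 < p) (S : Set E3) :
    ∫⁻ z in S, f z ≤ (∫⁻ z, f z ^ p) ^ (1/p) * (volume S) ^ (1 - 1/p) := by
  have hc : p.HolderConjugate (p/(p-1)) := Real.HolderConjugate.conjExponent hp
  have hexp : 1/(p/(p-1)) = 1 - 1/p := by
    rw [one_div, inv_div]
    field_simp
  have H := ENNReal.lintegral_mul_le_Lp_mul_Lq (volume.restrict S) hc hm.aemeasurable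
    (aemeasurable_const (b := (1:ℝ≥0∞)))
  simp only [Pi.mul_apply, mul_one, ENNReal.one_rpow, lintegral_one,
    Measure.restrict_apply MeasurableSet.univ, Set.univ_inter] at H
  refine H.trans ?_
  rw [hexp]
  exact mul_le_mul' (ENNReal.rpow_le_rpow (setLIntegral_le_lintegral _ _)
    (by positivity)) le_rfl

lemma lint_ball_smul (h : E3 → ℝ≥0∞) (hm : Measurable h) (x : E3) {s : ℝ} (hs : 0 < s) :
    ∫⁻ y in closedBall x 1, h (x + s • (y - x))
      = ENNReal.ofReal (s ^ 3)⁻¹ * ∫⁻ z in closedBall x s, h z := by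
  set F : E3 → ℝ≥0∞ := fun z => (closedBall x s).indicator h (z + (x - s • x)) with hF
  have hFm : Measurable F :=
    (hm.indicator measurableSet_closedBall).comp (measurable_add_const _)
  have key : ∀ y : E3, (closedBall x 1).indicator (fun y => h (x + s • (y - x))) y = F (s • y) := by
    intro y
    have hmem : y ∈ closedBall x 1 ↔ s • y + (x - s • x) ∈ closedBall x s := by
      simp only [mem_closedBall, dist_eq_norm]
      constructor
      · intro hy
        have : s • y + (x - s • x) - x = s • (y - x) := by
          rw [smul_sub]; abel
        rw [this, norm_smul, Real.norm_eq_abs, abs_of_pos hs]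
        nlinarith
      · intro hy
        have h2 : s • y + (x - s • x) - x = s • (y - x) := by rw [smul_sub]; abel
        rw [h2, norm_smul, Real.norm_eq_abs, abs_of_pos hs] at hy
        nlinarith
    have harg : x + s • (y - x) = s • y + (x - s • x) := by rw [smul_sub]; abel
    by_cases hy : y ∈ closedBall x 1
    · rw [Set.indicator_of_mem hy]
      show h (x + s • (y - x)) = (closedBall x s).indicator h (s • y + (x - s • x))
      rw [Set.indicator_of_mem (hmem.1 hy), harg]
    · rw [Set.indicator_of_notMem hy]
      show (0:ℝ≥0∞) = (closedBall x s).indicator h (s • y + (x - s • x))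
      rw [Set.indicator_of_notMem (fun c => hy (hmem.2 c))]
  rw [← lintegral_indicator measurableSet_closedBall]
  calc ∫⁻ y, (closedBall x 1).indicator (fun y => h (x + s • (y - x))) y
      = ∫⁻ y, F (s • y) := by simp_rw [key]
    _ = ENNReal.ofReal (s ^ 3)⁻¹ * ∫⁻ z, F z := lint_smul F hFm hs
    _ = ENNReal.ofReal (s ^ 3)⁻¹ * ∫⁻ z, (closedBall x s).indicator h z := by
        rw [lintegral_add_right_eq_self (fun z => (closedBall x s).indicator h z) (x - s • x)]
    _ = ENNReal.ofReal (s ^ 3)⁻¹ * ∫⁻ z in closedBall x s, h z := by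
        rw [lintegral_indicator measurableSet_closedBall]

lemma unit_bound {q r : ℝ} (hq : 1 < q) (hr : 3 < r) :
    ∃ M : ℝ≥0∞, M ≠ ⊤ ∧ ∀ g : E3 → ℝ, ContDiff ℝ 1 g → ∀ x : E3,
      (‖g x‖₊ : ℝ≥0∞) ≤ M * (eLpNorm g (ENNReal.ofReal q) volume
        + eLpNorm (fun z => ‖fderiv ℝ g z‖) (ENNReal.ofReal r) volume) := by
  have hq0 : (0:ℝ) < q := lt_trans one_pos hq
  have hr0 : (0:ℝ) < r := by linarith
  set κ := volume (ball (0:E3) 1) with hκ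
  have hκ0 : 0 < κ := measure_ball_pos _ _ one_pos
  have hκt : κ ≠ ⊤ := measure_ball_lt_top.ne
  set I := ∫⁻ s in Set.Ioc (0:ℝ) 1, ENNReal.ofReal (s ^ (-(3/r))) with hI
  have hIt : I ≠ ⊤ := by
    have h13 : (3:ℝ)/r < 1 := (div_lt_one hr0).2 hr
    have hint : IntervalIntegrable (fun s : ℝ => s ^ (-(3/r))) volume 0 1 :=
      intervalIntegral.intervalIntegrable_rpow' (by linarith)
    have h2 : IntegrableOn (fun s : ℝ => s ^ (-(3/r))) (Set.Ioc 0 1) volume :=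
      (intervalIntegrable_iff_integrableOn_Ioc_of_le (by norm_num)).mp hint
    exact h2.lintegral_lt_top.ne
  have hq1 : (0:ℝ) ≤ 1 - 1/q := by
    rw [sub_nonneg]; exact (div_le_one hq0).2 hq.le
  have hr1 : (0:ℝ) ≤ 1 - 1/r := by
    rw [sub_nonneg]; exact (div_le_one hr0).2 (by linarith)
  refine ⟨κ⁻¹ * max (κ ^ (1 - 1/q)) (I * κ ^ (1 - 1/r)), ?_, ?_⟩
  · exact ENNReal.mul_ne_top (ENNReal.inv_ne_top.2 hκ0.ne')
      ((max_lt (ENNReal.rpow_lt_top_of_nonneg hq1 hκt)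
        (ENNReal.mul_lt_top hIt.lt_top (ENNReal.rpow_lt_top_of_nonneg hr1 hκt))).ne)
  intro g hg x
  set Nq := eLpNorm g (ENNReal.ofReal q) volume with hNq
  set D : E3 → ℝ := fun z => ‖fderiv ℝ g z‖ with hD
  set Nr := eLpNorm D (ENNReal.ofReal r) volume with hNr
  have hDc : Continuous D := (hg.continuous_fderiv one_ne_zero).norm
  have hDnn : ∀ z, 0 ≤ D z := fun z => norm_nonneg _
  have hgc : Continuous g := hg.continuous
  -- the pointwise bound coming from the segment estimate
  have point : ∀ y ∈ closedBall x 1, (‖g x‖₊ : ℝ≥0∞) ≤ (‖g y‖₊ : ℝ≥0∞)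
      + ∫⁻ s in Set.Ioc (0:ℝ) 1, ENNReal.ofReal (D (x + s • (y - x))) := by
    intro y hy
    have h1 := seg g hg x y
    have hyx : ‖y - x‖ ≤ 1 := by
      rwa [mem_closedBall, dist_eq_norm] at hy
    have hcc : Continuous fun t : ℝ => D (x + t • (y - x)) := hDc.comp (by fun_prop)
    have h2 : ∫ t in (0:ℝ)..1, D (x + t • (y - x)) * ‖y - x‖
        ≤ ∫ t in (0:ℝ)..1, D (x + t • (y - x)) := by
      apply intervalIntegral.integral_mono_on (by norm_num)
        ((hcc.mul continuous_const).intervalIntegrable 0 1)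
        (hcc.intervalIntegrable 0 1)
      intro t _
      exact mul_le_of_le_one_right (hDnn _) hyx
    have h3 : |g x| ≤ |g y| + ∫ t in (0:ℝ)..1, D (x + t • (y - x)) := by
      refine h1.trans ?_; linarith
    have h4 : ∫ t in (0:ℝ)..1, D (x + t • (y - x))
        = ∫ t in Set.Ioc (0:ℝ) 1, D (x + t • (y - x)) :=
      intervalIntegral.integral_of_le (by norm_num)
    have h5 : ENNReal.ofReal (∫ t in Set.Ioc (0:ℝ) 1, D (x + t • (y - x)))
        = ∫⁻ t in Set.Ioc (0:ℝ) 1, ENNReal.ofReal (D (x + t • (y - x))) :=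
      ofReal_integral_eq_lintegral_ofReal (hcc.integrableOn_Ioc)
        (Filter.Eventually.of_forall fun t => hDnn _)
    calc (‖g x‖₊ : ℝ≥0∞) = ENNReal.ofReal |g x| := Real.enorm_eq_ofReal_abs _
      _ ≤ ENNReal.ofReal (|g y| + ∫ t in (0:ℝ)..1, D (x + t • (y - x))) :=
          ENNReal.ofReal_le_ofReal h3
      _ ≤ ENNReal.ofReal |g y| + ENNReal.ofReal (∫ t in (0:ℝ)..1, D (x + t • (y - x))) :=
          ENNReal.ofReal_add_le
      _ = (‖g y‖₊ : ℝ≥0∞) + ∫⁻ s in Set.Ioc (0:ℝ) 1, ENNReal.ofReal (D (x + s • (y - x))) := by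
          rw [← Real.enorm_eq_ofReal_abs, h4, h5]; rfl
  have hvol : volume (closedBall x 1) = κ := by
    rw [Measure.addHaar_closedBall volume x (by norm_num : (0:ℝ) ≤ 1)]
    simp [hκ]
  -- measurability of the double integrand
  have hFc : Continuous fun p : E3 × ℝ => ENNReal.ofReal (D (x + p.2 • (p.1 - x))) :=
    ENNReal.continuous_ofReal.comp (hDc.comp (by fun_prop))
  have hFm : Measurable (Function.uncurry fun y (s:ℝ) => ENNReal.ofReal (D (x + s • (y - x)))) :=
    hFc.measurable
  have hinner_meas : Measurable fun y : E3 =>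
      ∫⁻ s in Set.Ioc (0:ℝ) 1, ENNReal.ofReal (D (x + s • (y - x))) :=
    Measurable.lintegral_prod_right hFm
  -- integrate the pointwise bound over the unit ball
  have step1 : κ * (‖g x‖₊ : ℝ≥0∞)
      ≤ (∫⁻ y in closedBall x 1, (‖g y‖₊ : ℝ≥0∞))
        + ∫⁻ y in closedBall x 1, ∫⁻ s in Set.Ioc (0:ℝ) 1,
            ENNReal.ofReal (D (x + s • (y - x))) := by
    have e1 : κ * (‖g x‖₊ : ℝ≥0∞) = ∫⁻ _y in closedBall x 1, (‖g x‖₊ : ℝ≥0∞) := by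
      rw [setLIntegral_const, hvol, mul_comm]
    rw [e1, ← lintegral_add_left hgc.measurable.nnnorm.coe_nnreal_ennreal]
    exact setLIntegral_mono (hgc.measurable.nnnorm.coe_nnreal_ennreal.add hinner_meas) point
  -- Hölder for the first term
  have T1 : ∫⁻ y in closedBall x 1, (‖g y‖₊ : ℝ≥0∞) ≤ Nq * κ ^ (1 - 1/q) := by
    have h := holder_ball (fun y => (‖g y‖₊ : ℝ≥0∞)) hgc.measurable.nnnorm.coe_nnreal_ennreal hq (closedBall x 1)
    rw [hvol] at h
    refine h.trans ?_
    gcongr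
    rw [hNq, eLpNorm_eq_lintegral_rpow_enorm_toReal (ofReal_pos.2 hq0).ne' ofReal_ne_top,
      toReal_ofReal hq0.le]
    exact le_rfl
  -- change of variables + Hölder for the second term
  have T2 : ∫⁻ y in closedBall x 1, ∫⁻ s in Set.Ioc (0:ℝ) 1,
        ENNReal.ofReal (D (x + s • (y - x)))
      ≤ I * κ ^ (1 - 1/r) * Nr := by
    have hswap : ∫⁻ y in closedBall x 1, ∫⁻ s in Set.Ioc (0:ℝ) 1,
          ENNReal.ofReal (D (x + s • (y - x)))
        = ∫⁻ s in Set.Ioc (0:ℝ) 1, ∫⁻ y in closedBall x 1,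
            ENNReal.ofReal (D (x + s • (y - x))) :=
      lintegral_lintegral_swap hFm.aemeasurable
    rw [hswap]
    have hDm : Measurable fun z => ENNReal.ofReal (D z) :=
      (ENNReal.continuous_ofReal.comp hDc).measurable
    have hNr_eq : (∫⁻ z, ENNReal.ofReal (D z) ^ r) ^ (1/r) = Nr := by
      simp_rw [fun z => Real.enorm_eq_ofReal (hDnn z) |>.symm]
      rw [hNr, eLpNorm_eq_lintegral_rpow_enorm_toReal (ofReal_pos.2 hr0).ne' ofReal_ne_top,
        toReal_ofReal hr0.le]
    have per_s : ∀ s ∈ Set.Ioc (0:ℝ) 1,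
        (∫⁻ y in closedBall x 1, ENNReal.ofReal (D (x + s • (y - x))))
          ≤ ENNReal.ofReal (s ^ (-(3/r))) * (κ ^ (1 - 1/r) * Nr) := by
      intro s hs
      obtain ⟨hs0, _hs1⟩ := hs
      set a := ENNReal.ofReal s with ha
      have ha0 : a ≠ 0 := (ofReal_pos.2 hs0).ne'
      have hat : a ≠ ⊤ := ofReal_ne_top
      have e3 : ENNReal.ofReal (s ^ 3) = a ^ (3:ℝ) := by
        rw [ha, ENNReal.ofReal_rpow_of_pos hs0, ← Real.rpow_natCast s 3]
        norm_num
      calc (∫⁻ y in closedBall x 1, ENNReal.ofReal (D (x + s • (y - x))))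
          = ENNReal.ofReal (s ^ 3)⁻¹ * ∫⁻ z in closedBall x s, ENNReal.ofReal (D z) :=
            lint_ball_smul _ hDm x hs0
        _ ≤ ENNReal.ofReal (s ^ 3)⁻¹
            * ((∫⁻ z, ENNReal.ofReal (D z) ^ r) ^ (1/r) * (volume (closedBall x s)) ^ (1 - 1/r)) := by
            gcongr
            exact holder_ball _ hDm (by linarith) _
        _ = a ^ (-(3:ℝ)) * (Nr * (a ^ (3:ℝ) * κ) ^ (1 - 1/r)) := by
            rw [hNr_eq, Measure.addHaar_closedBall volume x hs0.le]
            simp only [finrank_euclideanSpace, Fintype.card_fin]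
            rw [ENNReal.ofReal_inv_of_pos (by positivity : (0:ℝ) < s ^ 3), e3,
              ← ENNReal.rpow_neg]
        _ = ENNReal.ofReal (s ^ (-(3/r))) * (κ ^ (1 - 1/r) * Nr) := by
            rw [ENNReal.mul_rpow_of_nonneg _ _ hr1, ← ENNReal.rpow_mul]
            rw [show a ^ (-(3:ℝ)) * (Nr * (a ^ (3 * (1 - 1/r)) * κ ^ (1 - 1/r)))
                = (a ^ (-(3:ℝ)) * a ^ (3 * (1 - 1/r))) * (κ ^ (1 - 1/r) * Nr) by ring]
            rw [← ENNReal.rpow_add _ _ ha0 hat]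
            congr 1
            rw [ha, ENNReal.ofReal_rpow_of_pos hs0]
            congr 1
            congr 1
            field_simp
            ring
    calc ∫⁻ s in Set.Ioc (0:ℝ) 1, ∫⁻ y in closedBall x 1,
            ENNReal.ofReal (D (x + s • (y - x)))
        ≤ ∫⁻ s in Set.Ioc (0:ℝ) 1, ENNReal.ofReal (s ^ (-(3/r))) * (κ ^ (1 - 1/r) * Nr) :=
          setLIntegral_mono ((ENNReal.measurable_ofReal.comp
            (by fun_prop : Measurable fun s:ℝ => s ^ (-(3/r)))).mul_const _) per_s
      _ = I * κ ^ (1 - 1/r) * Nr := by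
          rw [lintegral_mul_const _
            (by fun_prop : Measurable fun s:ℝ => ENNReal.ofReal (s ^ (-(3/r)))), mul_assoc]
  calc (‖g x‖₊ : ℝ≥0∞) = κ⁻¹ * (κ * (‖g x‖₊ : ℝ≥0∞)) := by
        rw [← mul_assoc, ENNReal.inv_mul_cancel hκ0.ne' hκt, one_mul]
    _ ≤ κ⁻¹ * (max (κ ^ (1 - 1/q)) (I * κ ^ (1 - 1/r)) * (Nq + Nr)) := by
        refine mul_le_mul' le_rfl ?_
        refine (step1.trans (add_le_add T1 T2)).trans ?_
        calc Nq * κ ^ (1 - 1/q) + I * κ ^ (1 - 1/r) * Nr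
            ≤ Nq * max (κ ^ (1 - 1/q)) (I * κ ^ (1 - 1/r))
              + max (κ ^ (1 - 1/q)) (I * κ ^ (1 - 1/r)) * Nr :=
              add_le_add (mul_le_mul_right (le_max_left _ _) _)
                (mul_le_mul_left (le_max_right _ _) _)
          _ = max (κ ^ (1 - 1/q)) (I * κ ^ (1 - 1/r)) * (Nq + Nr) := by
              rw [mul_comm Nq]; ring
    _ = κ⁻¹ * max (κ ^ (1 - 1/q)) (I * κ ^ (1 - 1/r)) * (Nq + Nr) := by
        rw [mul_assoc]

theorem stmt_18 (q r : ℝ) (hq : 1 < q) (hr : 3 < r) :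
    ∃ C : ℝ, 0 < C ∧
      ∀ g : EuclideanSpace ℝ (Fin 3) → ℝ,
        ContDiff ℝ 1 g →
        MemLp g (ENNReal.ofReal q) volume →
        MemLp (fun x => ‖fderiv ℝ g x‖) (ENNReal.ofReal r) volume →
        MemLp g ⊤ volume ∧
          eLpNorm g ⊤ volume ≤
            ENNReal.ofReal C *
              eLpNorm g (ENNReal.ofReal q) volume ^ (q * (r - 3) / (3 * r + q * (r - 3))) *
              eLpNorm (fun x => ‖fderiv ℝ g x‖) (ENNReal.ofReal r) volume ^
                (3 * r / (3 * r + q * (r - 3))) := by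
  have hq0 : (0:ℝ) < q := lt_trans one_pos hq
  have hr0 : (0:ℝ) < r := by linarith
  have hd : (0:ℝ) < 3 * r + q * (r - 3) := by nlinarith
  set θ1 : ℝ := q * (r - 3) / (3 * r + q * (r - 3)) with hθ1
  set θ2 : ℝ := 3 * r / (3 * r + q * (r - 3)) with hθ2
  have hθ1nn : 0 ≤ θ1 := by
    apply div_nonneg _ hd.le; nlinarith
  have hθ2nn : 0 ≤ θ2 := by
    apply div_nonneg _ hd.le; nlinarith
  obtain ⟨M, hMt, hM⟩ := unit_bound hq hr
  refine ⟨(2 * M).toReal + 1, by positivity, ?_⟩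
  intro g hg hgq hgr
  set Nq := eLpNorm g (ENNReal.ofReal q) volume with hNqd
  set Nr := eLpNorm (fun x => ‖fderiv ℝ g x‖) (ENNReal.ofReal r) volume with hNrd
  have hNqt : Nq ≠ ⊤ := hgq.2.ne
  have hNrt : Nr ≠ ⊤ := hgr.2.ne
  -- the key pointwise bound
  have main : ∀ x : EuclideanSpace ℝ (Fin 3),
      (‖g x‖₊ : ℝ≥0∞) ≤ ENNReal.ofReal ((2 * M).toReal + 1) * Nq ^ θ1 * Nr ^ θ2 := by
    by_cases hNq0 : Nq = 0
    · have hg0 : g = fun _ => 0 := by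
        have := (eLpNorm_eq_zero_iff hg.continuous.aestronglyMeasurable
          (ofReal_pos.2 hq0).ne').1 hNq0
        exact (Continuous.ae_eq_iff_eq volume hg.continuous continuous_const).1 this
      intro x
      rw [hg0]
      simp
    by_cases hNr0 : Nr = 0
    · exfalso
      have hD0 : (fun x => ‖fderiv ℝ g x‖) = fun _ => (0:ℝ) := by
        have := (eLpNorm_eq_zero_iff ((hg.continuous_fderiv one_ne_zero).norm).aestronglyMeasurable
          (ofReal_pos.2 hr0).ne').1 hNr0
        exact (Continuous.ae_eq_iff_eq volume
          (hg.continuous_fderiv one_ne_zero).norm continuous_const).1 this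
      have hfd : ∀ x, fderiv ℝ g x = 0 := by
        intro x
        have := congrFun hD0 x
        simpa using this
      have hconst : ∀ x y : EuclideanSpace ℝ (Fin 3), g x = g y :=
        is_const_of_fderiv_eq_zero (hg.differentiable one_ne_zero) hfd
      -- g is a nonzero constant would contradict `Memℒp`; g zero would contradict hNq0
      by_cases hz : g 0 = 0
      · apply hNq0
        have hg0 : g = fun _ => 0 := funext fun x => (hconst x 0).trans hz
        rw [hNqd, hg0]
        simp
      · have hgc : g = fun _ => g 0 := funext fun x => hconst x 0
        have : eLpNorm g (ENNReal.ofReal q) volume = ⊤ := by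
          rw [hgc, eLpNorm_const _ (ofReal_pos.2 hq0).ne' (NeZero.ne volume)]
          rw [MeasureTheory.measure_univ_of_isAddLeftInvariant]
          rw [ENNReal.top_rpow_of_pos (by
            rw [toReal_ofReal hq0.le]; positivity)]
          rw [ENNReal.mul_top]
          simp [hz]
        exact hNqt this
    -- main case : both norms positive
    have hA : 0 < Nq.toReal := toReal_pos hNq0 hNqt
    have hB : 0 < Nr.toReal := toReal_pos hNr0 hNrt
    set A₀ := Nq.toReal with hA₀
    set B₀ := Nr.toReal with hB₀
    have hσ : (0:ℝ) < 3/q + 1 - 3/r := by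
      have h1 : (3:ℝ)/r < 1 := (div_lt_one hr0).2 (by linarith)
      have h2 : (0:ℝ) < 3/q := by positivity
      linarith
    set σ := 3/q + 1 - 3/r with hσd
    set c := (A₀ / B₀) ^ (1/σ) with hcd
    have hAB : 0 < A₀ / B₀ := div_pos hA hB
    have hc : 0 < c := Real.rpow_pos_of_pos hAB _
    -- the dilated function
    set gc : EuclideanSpace ℝ (Fin 3) → ℝ := fun x => g (c • x) with hgcd
    have hgcC : ContDiff ℝ 1 gc := hg.comp (contDiff_id.const_smul c)
    have hfder : ∀ z, fderiv ℝ gc z = c • fderiv ℝ g (c • z) := by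
      intro z
      have h2 : HasFDerivAt (fun x : EuclideanSpace ℝ (Fin 3) => c • x)
          (c • ContinuousLinearMap.id ℝ (EuclideanSpace ℝ (Fin 3))) z :=
        (hasFDerivAt_id z).const_smul c
      have h3 := ((hg.differentiable one_ne_zero (c • z)).hasFDerivAt).comp z h2
      have h4 : (fderiv ℝ g (c • z)).comp (c • ContinuousLinearMap.id ℝ (EuclideanSpace ℝ (Fin 3)))
          = c • fderiv ℝ g (c • z) := by
        ext v; simp
      rw [← h4]
      exact h3.fderiv
    have hnder : (fun z => ‖fderiv ℝ gc z‖)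
        = c • fun z => ‖fderiv ℝ g (c • z)‖ := by
      funext z
      simp only [hfder z, norm_smul, Real.norm_eq_abs, abs_of_pos hc, Pi.smul_apply, smul_eq_mul]
    -- compute the dilated norms
    have hNqc : eLpNorm gc (ENNReal.ofReal q) volume = ENNReal.ofReal c ^ (-(3/q)) * Nq :=
      dil_eLpNorm g hg.continuous hq0 hc
    have hNrc : eLpNorm (fun z => ‖fderiv ℝ gc z‖) (ENNReal.ofReal r) volume
        = ENNReal.ofReal c * (ENNReal.ofReal c ^ (-(3/r)) * Nr) := by
      rw [hnder, eLpNorm_const_smul, dil_eLpNorm _ (hg.continuous_fderiv one_ne_zero).norm hr0 hc,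
        Real.enorm_eq_ofReal hc.le]
    -- real-number computation of the optimized bound
    have hσne : σ ≠ 0 := hσ.ne'
    have hqne : q ≠ 0 := hq0.ne'
    have hrne : r ≠ 0 := hr0.ne'
    have hdne : 3 * r + q * (r - 3) ≠ 0 := hd.ne'
    have hqrne : q * r ≠ 0 := by positivity
    have hσeq : σ = (3 * r + q * (r - 3)) / (q * r) := by
      rw [hσd, eq_div_iff hqrne]
      field_simp
      ring
    have e1 : c ^ (-(3/q)) * A₀ = A₀ ^ θ1 * B₀ ^ θ2 := by
      have h1 : c ^ (-(3/q)) = (A₀/B₀) ^ (-θ2) := by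
        rw [hcd, ← Real.rpow_mul hAB.le]
        congr 1
        rw [hθ2, hσeq, one_div_div]
        field_simp
      rw [h1, Real.div_rpow hA.le hB.le, Real.rpow_neg hB.le, div_eq_mul_inv, inv_inv]
      have h2 : A₀ ^ (-θ2) * B₀ ^ θ2 * A₀ = A₀ ^ (-θ2) * A₀ ^ (1:ℝ) * B₀ ^ θ2 := by
        rw [Real.rpow_one]; ring
      rw [h2, ← Real.rpow_add hA]
      congr 2
      rw [hθ1, hθ2]
      field_simp
      ring
    have e2 : c * c ^ (-(3/r)) * B₀ = A₀ ^ θ1 * B₀ ^ θ2 := by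
      have h0 : c * c ^ (-(3/r)) = c ^ (1 + -(3/r)) := by
        rw [Real.rpow_add hc, Real.rpow_one]
      have h1 : c ^ (1 + -(3/r)) = (A₀/B₀) ^ θ1 := by
        rw [hcd, ← Real.rpow_mul hAB.le]
        congr 1
        rw [hθ1, hσeq, one_div_div]
        field_simp
        ring
      rw [h0, h1, Real.div_rpow hA.le hB.le, div_mul_eq_mul_div, mul_div_assoc]
      congr 1
      have h3 : B₀ / B₀ ^ θ1 = B₀ ^ (1 - θ1) := by
        rw [Real.rpow_sub hB, Real.rpow_one]
      rw [h3]
      congr 1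
      rw [hθ1, hθ2]
      rw [sub_eq_iff_eq_add, ← add_div, eq_div_iff hdne]
      ring
    -- put it together
    intro x
    have happ := hM gc hgcC (c⁻¹ • x)
    have hval : gc (c⁻¹ • x) = g x := by
      rw [hgcd]
      simp only [smul_inv_smul₀ hc.ne']
    rw [hval, hNqc, hNrc] at happ
    have hofc : ∀ t : ℝ, ENNReal.ofReal c ^ t = ENNReal.ofReal (c ^ t) := fun t =>
      ENNReal.ofReal_rpow_of_pos hc
    have hNqr : Nq = ENNReal.ofReal A₀ := (ofReal_toReal hNqt).symm
    have hNrr : Nr = ENNReal.ofReal B₀ := (ofReal_toReal hNrt).symm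
    have hsum : ENNReal.ofReal c ^ (-(3/q)) * Nq + ENNReal.ofReal c * (ENNReal.ofReal c ^ (-(3/r)) * Nr)
        = ENNReal.ofReal (A₀ ^ θ1 * B₀ ^ θ2) + ENNReal.ofReal (A₀ ^ θ1 * B₀ ^ θ2) := by
      rw [hofc, hofc, hNqr, hNrr, ← ENNReal.ofReal_mul (by positivity),
        ← ENNReal.ofReal_mul (by positivity), ← ENNReal.ofReal_mul (by positivity), e1]
      congr 1
      rw [← mul_assoc]
      exact congrArg _ e2
    rw [hsum] at happ
    refine happ.trans ?_
    have hP : ENNReal.ofReal (A₀ ^ θ1 * B₀ ^ θ2) + ENNReal.ofReal (A₀ ^ θ1 * B₀ ^ θ2)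
        = 2 * ENNReal.ofReal (A₀ ^ θ1 * B₀ ^ θ2) := (two_mul _).symm
    rw [hP, ← mul_assoc]
    have h2M : M * 2 ≤ ENNReal.ofReal ((2 * M).toReal + 1) := by
      rw [mul_comm]
      calc 2 * M = ENNReal.ofReal ((2 * M).toReal) := by
            rw [ofReal_toReal (ENNReal.mul_ne_top (by norm_num) hMt)]
        _ ≤ ENNReal.ofReal ((2 * M).toReal + 1) := ofReal_le_ofReal (by linarith)
    calc M * 2 * ENNReal.ofReal (A₀ ^ θ1 * B₀ ^ θ2)
        ≤ ENNReal.ofReal ((2 * M).toReal + 1) * ENNReal.ofReal (A₀ ^ θ1 * B₀ ^ θ2) :=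
          mul_le_mul_left h2M _
      _ = ENNReal.ofReal ((2 * M).toReal + 1) * Nq ^ θ1 * Nr ^ θ2 := by
          rw [ENNReal.ofReal_mul (by positivity : (0:ℝ) ≤ A₀ ^ θ1),
            ← ENNReal.ofReal_rpow_of_pos hA, ← ENNReal.ofReal_rpow_of_pos hB,
            hNqr, hNrr, mul_assoc]
  have hfin : ENNReal.ofReal ((2 * M).toReal + 1) * Nq ^ θ1 * Nr ^ θ2 ≠ ⊤ :=
    ENNReal.mul_ne_top (ENNReal.mul_ne_top ofReal_ne_top
      (ENNReal.rpow_ne_top_of_nonneg hθ1nn hNqt)) (ENNReal.rpow_ne_top_of_nonneg hθ2nn hNrt)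
  constructor
  · exact ⟨hg.continuous.aestronglyMeasurable, by
      rw [eLpNorm_exponent_top]
      exact lt_of_le_of_lt (essSup_le_of_ae_le _ (Filter.Eventually.of_forall main)) hfin.lt_top⟩
  · rw [eLpNorm_exponent_top]
    exact essSup_le_of_ae_le _ (Filter.Eventually.of_forall main)
end
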